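/- arXiv:1202.5523 — 2 statements merged into one kernel-verified Lean document; each statement's English description precedes it below -/
import Mathlib

section
/- Weighted path-sum with noncommuting matrix weights: let G be a finite quiver with vertex set V, to each vertex ν attach a dimension d(ν) ≥ 1, and to each edge (μ, ν) ∈ E(G) attach a weight matrix w_{νμ} of size d(ν) × d(μ) over ℂ. Let M(z) be the block matrix over ℂ[[z]], indexed by V, whose (ν, μ) block is z·w_{νμ} if (μ, ν) ∈ E(G) and 0 otherwise. Then Id − M(z) is invertible over ℂ[[z]], and for all α, ω ∈ V the (ω, α) block of (Id − M(z))⁻¹ equals Σ_π z^p · F_{V∖{σ0,…,σ(p−1)}}(σp) · w_{σp σ(p−1)} · F_{V∖{σ0,…,σ(p−2)}}(σ(p−1)) ⋯ w_{σ1 σ0} · F_V(σ0), the sum running over all simple paths π = (σ0 σ1 ⋯ σp) of G with σ0 = α and σp = ω (for α = ω the only such π is the trivial path and the summand is F_V(α)). -/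
noncomputable section

variable {V : Type}

/-- The total index space of the block structure: one block `Fin (d v)` per vertex. -/
abbrev BIdx (d : V → ℕ) : Type := Σ v : V, Fin (d v)

/-- The global (block-supported) matrix over `ℂ[[z]]` whose `(ν, μ)` block is the
constant matrix `w_{νμ}` and whose other blocks vanish. -/
def embW [DecidableEq V] (d : V → ℕ)
    (wt : ∀ ν μ : V, Matrix (Fin (d ν)) (Fin (d μ)) ℂ) (ν μ : V) :
    Matrix (BIdx d) (BIdx d) (PowerSeries ℂ) :=
  Matrix.of fun p q =>
    if p.1 = ν ∧ q.1 = μ then (PowerSeries.C : ℂ →+* PowerSeries ℂ) (wt p.1 q.1 p.2 q.2) else 0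

/-- The global matrix which is the identity on the `(α, α)` block and zero elsewhere. -/
def blockId [Fintype V] [DecidableEq V] (d : V → ℕ) (α : V) :
    Matrix (BIdx d) (BIdx d) (PowerSeries ℂ) :=
  Matrix.of fun p q =>
    if p.1 = α then (1 : Matrix (BIdx d) (BIdx d) (PowerSeries ℂ)) p q else 0

/-- Given a family `F` of dressed-vertex matrices, the (globally embedded) product
`w_{α μ_m} · F_{T∖{μ₂,…,μ_{m-1}}}(μ_m) · w_{μ_m μ_{m-1}} ⋯ F_T(μ₂) · w_{μ₂ α}`
attached to the simple cycle `(α μ₂ ⋯ μ_m α)` with internal vertex list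
`c = [μ₂, …, μ_m]` (here `T = S ∖ {α}`); for `c = []` it is the loop weight `w_{αα}`. -/
def cycG [Fintype V] [DecidableEq V] (d : V → ℕ)
    (wt : ∀ ν μ : V, Matrix (Fin (d ν)) (Fin (d μ)) ℂ)
    (F : Finset V → V → Matrix (BIdx d) (BIdx d) (PowerSeries ℂ)) (α : V) :
    Finset V → V → List V → Matrix (BIdx d) (BIdx d) (PowerSeries ℂ)
  | _, prev, [] => embW d wt α prev
  | T, prev, v :: r => cycG d wt F α (T.erase v) v r * F T v * embW d wt v prev

/-- Fuel-graded, globally embedded dressed-vertex matrix `F_S(α)`: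
`F_S(α) = (Id − Σ_γ z^m · w_{α μ_m} · F_{S∖{α,μ₂,…,μ_{m-1}}}(μ_m) ⋯ F_{S∖{α}}(μ₂) · w_{μ₂ α})⁻¹`,
the sum running over all nontrivial simple cycles `γ = (α μ₂ ⋯ μ_m α)` of the induced
subquiver `G[S]`, recorded by their internal vertex lists.  The matrix is embedded as
the `(α, α)` block of a global matrix (the summed matrix is supported on that block,
so the formula below performs exactly the block inversion). -/
def FMgAux [Fintype V] [DecidableEq V] (E : V → V → Prop) (d : V → ℕ)
    (wt : ∀ ν μ : V, Matrix (Fin (d ν)) (Fin (d μ)) ℂ) :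
    ℕ → Finset V → V → Matrix (BIdx d) (BIdx d) (PowerSeries ℂ)
  | 0, _, _ => 0
  | n + 1, S, α =>
      (1 - ∑ᶠ c ∈ {c : List V | c.Nodup ∧ α ∉ c ∧ (∀ v ∈ c, v ∈ S) ∧
            List.Chain E α (c ++ [α])},
          (PowerSeries.X : PowerSeries ℂ) ^ (c.length + 1) •
            cycG d wt (FMgAux E d wt n) α (S.erase α) α c)⁻¹
        + blockId d α - 1

/-- The globally embedded dressed-vertex matrix `F_S(α)`. -/
def FMg [Fintype V] [DecidableEq V] (E : V → V → Prop) (d : V → ℕ)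
    (wt : ∀ ν μ : V, Matrix (Fin (d ν)) (Fin (d μ)) ℂ)
    (S : Finset V) (α : V) : Matrix (BIdx d) (BIdx d) (PowerSeries ℂ) :=
  FMgAux E d wt S.card S α

/-- The globally embedded product
`F_{V∖{σ₀,…,σ_{p-1}}}(σ_p) · w_{σ_p σ_{p-1}} ⋯ w_{σ₁ σ₀} · F_V(σ₀)` attached to a
simple path `(σ₀ σ₁ ⋯ σ_p)`; `pathG T prev r` treats the remaining vertices `r`
after the current vertex `prev`, the vertices before `prev` having been deleted
from `T`. -/
def pathG [Fintype V] [DecidableEq V] (E : V → V → Prop) (d : V → ℕ)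
    (wt : ∀ ν μ : V, Matrix (Fin (d ν)) (Fin (d μ)) ℂ) :
    Finset V → V → List V → Matrix (BIdx d) (BIdx d) (PowerSeries ℂ)
  | T, prev, [] => FMg E d wt T prev
  | T, prev, v :: r =>
      pathG E d wt (T.erase prev) v r * embW d wt v prev * FMg E d wt T prev

/-- The summand attached to a simple path recorded by its full vertex sequence:
`z^p` times the alternating product of dressed-vertex matrices and edge weights. -/
def pathTerm [Fintype V] [DecidableEq V] (E : V → V → Prop) (d : V → ℕ)
    (wt : ∀ ν μ : V, Matrix (Fin (d ν)) (Fin (d μ)) ℂ) :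
    List V → Matrix (BIdx d) (BIdx d) (PowerSeries ℂ)
  | [] => 0
  | v :: r => (PowerSeries.X : PowerSeries ℂ) ^ r.length • pathG E d wt Finset.univ v r

open Classical in
/-- The block matrix `M(z)` over `ℂ[[z]]` whose `(ν, μ)` block is `z · w_{νμ}` when
`(μ, ν)` is an edge and `0` otherwise. -/
def Mz (E : V → V → Prop) (d : V → ℕ)
    (wt : ∀ ν μ : V, Matrix (Fin (d ν)) (Fin (d μ)) ℂ) :
    Matrix (BIdx d) (BIdx d) (PowerSeries ℂ) :=
  Matrix.of fun p q =>
    if E q.1 p.1 then PowerSeries.X * (PowerSeries.C : ℂ →+* PowerSeries ℂ) (wt p.1 q.1 p.2 q.2) else 0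

section Aux
set_option linter.unusedSectionVars false

open Matrix PowerSeries

variable {V : Type} [Fintype V] [DecidableEq V]

/-- row support predicate -/
def RS (d : V → ℕ) (P : V → Prop) (X : Matrix (BIdx d) (BIdx d) (PowerSeries ℂ)) : Prop :=
  ∀ p q, X p q ≠ 0 → P p.1

/-- column support predicate -/
def CS (d : V → ℕ) (P : V → Prop) (X : Matrix (BIdx d) (BIdx d) (PowerSeries ℂ)) : Prop :=
  ∀ p q, X p q ≠ 0 → P q.1

variable {d : V → ℕ} {P Q : V → Prop} {X Y : Matrix (BIdx d) (BIdx d) (PowerSeries ℂ)}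

lemma RS.mul (hX : RS d P X) (Y : Matrix (BIdx d) (BIdx d) (PowerSeries ℂ)) :
    RS d P (X * Y) := by
  intro p q h
  by_contra hP
  apply h
  rw [Matrix.mul_apply]
  refine Finset.sum_eq_zero fun r _ => ?_
  have hx : X p r = 0 := by
    by_contra h'; exact hP (hX p r h')
  rw [hx, zero_mul]

lemma CS.mul (hY : CS d P Y) (X : Matrix (BIdx d) (BIdx d) (PowerSeries ℂ)) :
    CS d P (X * Y) := by
  intro p q h
  by_contra hP
  apply h
  rw [Matrix.mul_apply]
  refine Finset.sum_eq_zero fun r _ => ?_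
  have hy : Y r q = 0 := by
    by_contra h'; exact hP (hY r q h')
  rw [hy, mul_zero]

lemma mul_eq_zero_disj (hX : CS d P X) (hY : RS d Q Y) (h : ∀ v, P v → Q v → False) :
    X * Y = 0 := by
  refine Matrix.ext fun p q => ?_
  rw [Matrix.mul_apply, Matrix.zero_apply]
  apply Finset.sum_eq_zero
  intro r _
  by_cases hx : X p r = 0
  · rw [hx, zero_mul]
  by_cases hy : Y r q = 0
  · rw [hy, mul_zero]
  exact (h r.1 (hX p r hx) (hY r q hy)).elim

lemma RS.sum {ι : Type*} {s : Finset ι} {f : ι → Matrix (BIdx d) (BIdx d) (PowerSeries ℂ)}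
    (h : ∀ i ∈ s, RS d P (f i)) : RS d P (∑ i ∈ s, f i) := by
  intro p q hne
  rw [Matrix.sum_apply] at hne
  obtain ⟨i, hi, hne⟩ := Finset.exists_ne_zero_of_sum_ne_zero hne
  exact h i hi p q hne

lemma CS.sum {ι : Type*} {s : Finset ι} {f : ι → Matrix (BIdx d) (BIdx d) (PowerSeries ℂ)}
    (h : ∀ i ∈ s, CS d P (f i)) : CS d P (∑ i ∈ s, f i) := by
  intro p q hne
  rw [Matrix.sum_apply] at hne
  obtain ⟨i, hi, hne⟩ := Finset.exists_ne_zero_of_sum_ne_zero hne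
  exact h i hi p q hne

lemma RS.smul (hX : RS d P X) (c : PowerSeries ℂ) : RS d P (c • X) := by
  intro p q h
  refine hX p q fun h0 => h ?_
  rw [Matrix.smul_apply, h0, smul_zero]

lemma CS.smul (hX : CS d P X) (c : PowerSeries ℂ) : CS d P (c • X) := by
  intro p q h
  refine hX p q fun h0 => h ?_
  rw [Matrix.smul_apply, h0, smul_zero]

lemma RS.zero : RS d P (0 : Matrix (BIdx d) (BIdx d) (PowerSeries ℂ)) := by
  intro p q h; simp at h

lemma CS.zero : CS d P (0 : Matrix (BIdx d) (BIdx d) (PowerSeries ℂ)) := by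
  intro p q h; simp at h

lemma RS.add {X Y : Matrix (BIdx d) (BIdx d) (PowerSeries ℂ)} (hX : RS d P X) (hY : RS d P Y) :
    RS d P (X + Y) := by
  intro p q h
  by_contra hP
  apply h
  have hx : X p q = 0 := by by_contra h'; exact hP (hX p q h')
  have hy : Y p q = 0 := by by_contra h'; exact hP (hY p q h')
  rw [Matrix.add_apply, hx, hy, add_zero]

lemma CS.add {X Y : Matrix (BIdx d) (BIdx d) (PowerSeries ℂ)} (hX : CS d P X) (hY : CS d P Y) :
    CS d P (X + Y) := by
  intro p q h
  by_contra hP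
  apply h
  have hx : X p q = 0 := by by_contra h'; exact hP (hX p q h')
  have hy : Y p q = 0 := by by_contra h'; exact hP (hY p q h')
  rw [Matrix.add_apply, hx, hy, add_zero]

lemma RS.mono (hX : RS d P X) (h : ∀ v, P v → Q v) : RS d Q X :=
  fun p q hne => h _ (hX p q hne)

lemma CS.mono (hX : CS d P X) (h : ∀ v, P v → Q v) : CS d Q X :=
  fun p q hne => h _ (hX p q hne)

end Aux
section Aux2
set_option linter.unusedSectionVars false
set_option maxHeartbeats 1000000

variable {V : Type} [Fintype V] [DecidableEq V] (E : V → V → Prop) (d : V → ℕ)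
    (wt : ∀ ν μ : V, Matrix (Fin (d ν)) (Fin (d μ)) ℂ)

lemma blockId_eq_diagonal (α : V) :
    blockId d α = Matrix.diagonal (fun p : BIdx d => if p.1 = α then 1 else 0) := by
  refine Matrix.ext fun p q => ?_
  by_cases hpq : p = q
  · subst hpq; simp [blockId, Matrix.diagonal_apply, Matrix.one_apply]
  · simp [blockId, Matrix.diagonal_apply_ne _ hpq, Matrix.one_apply_ne hpq]

lemma blockId_mul (α : V) (X : Matrix (BIdx d) (BIdx d) (PowerSeries ℂ)) :
    blockId d α * X = Matrix.of fun p q => if p.1 = α then X p q else 0 := by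
  refine Matrix.ext fun p q => ?_
  rw [blockId_eq_diagonal, Matrix.diagonal_mul]
  by_cases h : p.1 = α <;> simp [h]

lemma mul_blockId (α : V) (X : Matrix (BIdx d) (BIdx d) (PowerSeries ℂ)) :
    X * blockId d α = Matrix.of fun p q => if q.1 = α then X p q else 0 := by
  refine Matrix.ext fun p q => ?_
  rw [blockId_eq_diagonal, Matrix.mul_diagonal]
  by_cases h : q.1 = α <;> simp [h]

lemma RS_blockId (α : V) : RS d (· = α) (blockId d α) := by
  intro p q h
  simp only [blockId, Matrix.of_apply] at h
  by_contra hc; simp [hc] at h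

lemma CS_blockId (α : V) : CS d (· = α) (blockId d α) := by
  intro p q h
  simp only [blockId, Matrix.of_apply] at h
  by_cases hc : p = q
  · subst hc
    by_contra h2; simp [h2] at h
  · simp [Matrix.one_apply_ne hc] at h

lemma RS_embW (ν μ : V) : RS d (· = ν) (embW d wt ν μ) := by
  intro p q h
  simp only [embW, Matrix.of_apply] at h
  by_contra hc; simp [hc] at h

lemma CS_embW (ν μ : V) : CS d (· = μ) (embW d wt ν μ) := by
  intro p q h
  simp only [embW, Matrix.of_apply] at h
  by_contra hc; simp [hc] at h

lemma blockId_mul_of_RS {a : V} {X : Matrix (BIdx d) (BIdx d) (PowerSeries ℂ)}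
    (hX : RS d (· = a) X) : blockId d a * X = X := by
  rw [blockId_mul]
  refine Matrix.ext fun p q => ?_
  by_cases h : p.1 = a
  · simp [h]
  · simp only [Matrix.of_apply, h, if_false]
    by_contra h'
    exact h (hX p q fun h0 => h' h0.symm)

lemma blockId_mul_of_RS_ne {a v : V} {X : Matrix (BIdx d) (BIdx d) (PowerSeries ℂ)}
    (hX : RS d (· = a) X) (hv : v ≠ a) : blockId d v * X = 0 := by
  rw [blockId_mul]
  refine Matrix.ext fun p q => ?_
  simp only [Matrix.of_apply, Matrix.zero_apply]
  by_cases h : p.1 = v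
  · simp only [h, if_true]
    by_contra h'
    exact hv (h ▸ hX p q h')
  · simp [h]

lemma mul_blockId_of_CS {a : V} {X : Matrix (BIdx d) (BIdx d) (PowerSeries ℂ)}
    (hX : CS d (· = a) X) : X * blockId d a = X := by
  rw [mul_blockId]
  refine Matrix.ext fun p q => ?_
  by_cases h : q.1 = a
  · simp [h]
  · simp only [Matrix.of_apply, h, if_false]
    by_contra h'
    exact h (hX p q fun h0 => h' h0.symm)

lemma mul_blockId_of_CS_ne {a v : V} {X : Matrix (BIdx d) (BIdx d) (PowerSeries ℂ)}
    (hX : CS d (· = a) X) (hv : v ≠ a) : X * blockId d v = 0 := by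
  rw [mul_blockId]
  refine Matrix.ext fun p q => ?_
  simp only [Matrix.of_apply, Matrix.zero_apply]
  by_cases h : q.1 = v
  · simp only [h, if_true]
    by_contra h'
    exact hv (h ▸ hX p q h')
  · simp [h]

/-- the complementary identity: identity off the blocks of `S`. -/
def offId (d : V → ℕ) (S : Finset V) : Matrix (BIdx d) (BIdx d) (PowerSeries ℂ) :=
  Matrix.of fun p q =>
    if p.1 ∈ S then 0 else (1 : Matrix (BIdx d) (BIdx d) (PowerSeries ℂ)) p q

lemma RS_offId (S : Finset V) : RS d (· ∉ S) (offId d S) := by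
  intro p q h
  simp only [offId, Matrix.of_apply] at h
  by_contra hc; rw [if_pos hc] at h; exact h rfl

lemma CS_offId (S : Finset V) : CS d (· ∉ S) (offId d S) := by
  intro p q h
  simp only [offId, Matrix.of_apply] at h
  by_cases hc : p = q
  · subst hc
    by_contra h2; rw [if_pos h2] at h; exact h rfl
  · simp [Matrix.one_apply_ne hc] at h

lemma DSum_add_offId (S : Finset V) :
    (∑ α ∈ S, blockId d α) + offId d S = 1 := by
  refine Matrix.ext fun p q => ?_
  rw [Matrix.add_apply, Matrix.sum_apply]
  simp only [blockId, offId, Matrix.of_apply]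
  rw [Finset.sum_ite_eq S p.1 (fun _ => (1 : Matrix (BIdx d) (BIdx d) (PowerSeries ℂ)) p q)]
  by_cases h : p.1 ∈ S <;> simp [h]

/-- the restriction of `Mz` to the blocks in `S`. -/
def MzS (E : V → V → Prop) (d : V → ℕ)
    (wt : ∀ ν μ : V, Matrix (Fin (d ν)) (Fin (d μ)) ℂ) (S : Finset V) :
    Matrix (BIdx d) (BIdx d) (PowerSeries ℂ) :=
  Matrix.of fun p q => if p.1 ∈ S ∧ q.1 ∈ S then Mz E d wt p q else 0

lemma RS_MzS (S : Finset V) : RS d (· ∈ S) (MzS E d wt S) := by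
  intro p q h
  simp only [MzS, Matrix.of_apply] at h
  by_contra hc; simp [hc] at h

lemma CS_MzS (S : Finset V) : CS d (· ∈ S) (MzS E d wt S) := by
  intro p q h
  simp only [MzS, Matrix.of_apply] at h
  by_contra hc; simp [hc] at h

lemma MzS_univ : MzS E d wt Finset.univ = Mz E d wt := by
  refine Matrix.ext fun p q => ?_
  simp [MzS]

open Classical in
lemma Mz_apply (p q : BIdx d) :
    Mz E d wt p q = if E q.1 p.1 then PowerSeries.X * (PowerSeries.C : ℂ →+* PowerSeries ℂ) (wt p.1 q.1 p.2 q.2)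
      else 0 := rfl

lemma blockId_MzS_blockId_pos {S : Finset V} {a b : V} (ha : a ∈ S) (hb : b ∈ S)
    (hE : E b a) :
    blockId d a * MzS E d wt S * blockId d b = (PowerSeries.X : PowerSeries ℂ) • embW d wt a b := by
  classical
  rw [blockId_mul, mul_blockId]
  refine Matrix.ext fun p q => ?_
  simp only [Matrix.of_apply, Matrix.smul_apply, embW, MzS, Mz_apply]
  by_cases hp : p.1 = a
  · by_cases hq : q.1 = b
    · simp [hp, hq, ha, hb, hE, smul_eq_mul]
    · simp [hp, hq]
  · simp [hp]

lemma blockId_MzS_blockId_neg {S : Finset V} {a b : V} (hE : ¬ E b a) :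
    blockId d a * MzS E d wt S * blockId d b = 0 := by
  classical
  rw [blockId_mul, mul_blockId]
  refine Matrix.ext fun p q => ?_
  simp only [Matrix.of_apply, Matrix.zero_apply, MzS, Mz_apply]
  by_cases hp : p.1 = a
  · by_cases hq : q.1 = b
    · simp [hp, hq, hE]
    · simp [hp, hq]
  · simp [hp]

lemma one_sub_blockId_mul (α : V) (X : Matrix (BIdx d) (BIdx d) (PowerSeries ℂ)) :
    (1 - blockId d α) * X = Matrix.of fun p q => if p.1 = α then 0 else X p q := by
  rw [sub_mul, one_mul, blockId_mul]
  refine Matrix.ext fun p q => ?_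
  simp only [Matrix.sub_apply, Matrix.of_apply]
  by_cases h : p.1 = α <;> simp [h]

lemma mul_one_sub_blockId (α : V) (X : Matrix (BIdx d) (BIdx d) (PowerSeries ℂ)) :
    X * (1 - blockId d α) = Matrix.of fun p q => if q.1 = α then 0 else X p q := by
  rw [mul_sub, mul_one, mul_blockId]
  refine Matrix.ext fun p q => ?_
  simp only [Matrix.sub_apply, Matrix.of_apply]
  by_cases h : q.1 = α <;> simp [h]

lemma MzS_erase (S : Finset V) (α : V) :
    MzS E d wt (S.erase α) =
      (1 - blockId d α) * MzS E d wt S * (1 - blockId d α) := by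
  rw [one_sub_blockId_mul, mul_one_sub_blockId]
  refine Matrix.ext fun p q => ?_
  simp only [Matrix.of_apply, MzS, Finset.mem_erase]
  by_cases hp : p.1 = α <;> by_cases hq : q.1 = α <;>
    by_cases hp' : p.1 ∈ S <;> by_cases hq' : q.1 ∈ S <;>
      simp [hp, hq, hp', hq']

end Aux2
section Aux3
set_option linter.unusedSectionVars false
set_option maxHeartbeats 1000000

variable {V : Type} [Fintype V] [DecidableEq V] (E : V → V → Prop) (d : V → ℕ)
    (wt : ∀ ν μ : V, Matrix (Fin (d ν)) (Fin (d μ)) ℂ)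

/-- The set of internal vertex lists of simple cycles at `α` inside `S`. -/
def cycSet (E : V → V → Prop) (S : Finset V) (α : V) : Set (List V) :=
  {c : List V | c.Nodup ∧ α ∉ c ∧ (∀ v ∈ c, v ∈ S) ∧ List.Chain E α (c ++ [α])}

lemma cycSet_finite (S : Finset V) (α : V) : (cycSet E S α).Finite :=
  (List.finite_length_le V (Fintype.card V)).subset fun _ hl => hl.1.length_le_card

/-- The finite set of internal vertex lists of simple cycles at `α` inside `S`. -/
def cycFinset (E : V → V → Prop) (S : Finset V) (α : V) : Finset (List V) :=
  (cycSet_finite E S α).toFinset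

lemma mem_cycFinset {S : Finset V} {α : V} {c : List V} :
    c ∈ cycFinset E S α ↔
      c.Nodup ∧ α ∉ c ∧ (∀ v ∈ c, v ∈ S) ∧ List.Chain E α (c ++ [α]) := by
  rw [cycFinset, Set.Finite.mem_toFinset]; exact Iff.rfl

/-- The total cycle sum appearing in the definition of `FMgAux`. -/
def cycSum (E : V → V → Prop) (d : V → ℕ)
    (wt : ∀ ν μ : V, Matrix (Fin (d ν)) (Fin (d μ)) ℂ)
    (F : Finset V → V → Matrix (BIdx d) (BIdx d) (PowerSeries ℂ))
    (S : Finset V) (α : V) : Matrix (BIdx d) (BIdx d) (PowerSeries ℂ) :=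
  ∑ c ∈ cycFinset E S α,
    (PowerSeries.X : PowerSeries ℂ) ^ (c.length + 1) •
      cycG d wt F α (S.erase α) α c

lemma FMgAux_succ (n : ℕ) (S : Finset V) (α : V) :
    FMgAux E d wt (n + 1) S α =
      (1 - cycSum E d wt (FMgAux E d wt n) S α)⁻¹ + blockId d α - 1 := by
  have h : (∑ᶠ c ∈ {c : List V | c.Nodup ∧ α ∉ c ∧ (∀ v ∈ c, v ∈ S) ∧
        List.Chain E α (c ++ [α])},
        (PowerSeries.X : PowerSeries ℂ) ^ (c.length + 1) •
          cycG d wt (FMgAux E d wt n) α (S.erase α) α c)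
      = cycSum E d wt (FMgAux E d wt n) S α :=
    finsum_mem_eq_finite_toFinset_sum _ (cycSet_finite E S α)
  rw [FMgAux, h]

lemma RS_cycG (F : Finset V → V → Matrix (BIdx d) (BIdx d) (PowerSeries ℂ)) (α : V) :
    ∀ (c : List V) (T : Finset V) (prev : V), RS d (· = α) (cycG d wt F α T prev c) := by
  intro c
  induction c with
  | nil => intro T prev; exact RS_embW d wt α prev
  | cons v r ih =>
      intro T prev
      rw [cycG]
      exact ((ih (T.erase v) v).mul _).mul _

lemma CS_cycG (F : Finset V → V → Matrix (BIdx d) (BIdx d) (PowerSeries ℂ)) (α : V) :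
    ∀ (c : List V) (T : Finset V) (prev : V), CS d (· = prev) (cycG d wt F α T prev c) := by
  intro c
  induction c with
  | nil => intro T prev; exact CS_embW d wt α prev
  | cons v r ih =>
      intro T prev
      rw [cycG]
      exact (CS_embW d wt v prev).mul _

lemma RS_cycSum (F : Finset V → V → Matrix (BIdx d) (BIdx d) (PowerSeries ℂ))
    (S : Finset V) (α : V) : RS d (· = α) (cycSum E d wt F S α) :=
  RS.sum fun c _ => (RS_cycG d wt F α c _ α).smul _

lemma CS_cycSum (F : Finset V → V → Matrix (BIdx d) (BIdx d) (PowerSeries ℂ))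
    (S : Finset V) (α : V) : CS d (· = α) (cycSum E d wt F S α) :=
  CS.sum fun c _ => (CS_cycG d wt F α c _ α).smul _

lemma cc_cycSum (F : Finset V → V → Matrix (BIdx d) (BIdx d) (PowerSeries ℂ))
    (S : Finset V) (α : V) (p q : BIdx d) :
    PowerSeries.constantCoeff (cycSum E d wt F S α p q) = 0 := by
  rw [cycSum, Matrix.sum_apply, map_sum]
  refine Finset.sum_eq_zero fun c _ => ?_
  rw [Matrix.smul_apply, smul_eq_mul, map_mul, map_pow, PowerSeries.constantCoeff_X,
    zero_pow (Nat.succ_ne_zero _), zero_mul]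

lemma isUnit_det_one_sub {C : Matrix (BIdx d) (BIdx d) (PowerSeries ℂ)}
    (hcc : ∀ p q, PowerSeries.constantCoeff (C p q) = 0) : IsUnit (1 - C).det := by
  have hmap : (PowerSeries.constantCoeff (R := ℂ)).mapMatrix (1 - C)
      = (1 : Matrix (BIdx d) (BIdx d) ℂ) := by
    rw [map_sub, map_one]
    refine Matrix.ext fun p q => ?_
    simp [RingHom.mapMatrix_apply, Matrix.map_apply, hcc p q]
  have h1 : PowerSeries.constantCoeff (1 - C).det = 1 := by
    rw [RingHom.map_det, hmap, Matrix.det_one]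
  rw [PowerSeries.isUnit_iff_constantCoeff, h1]
  exact isUnit_one

/-- the core computation with the inverse in `FMgAux`. -/
lemma core_inv {α : V} {C : Matrix (BIdx d) (BIdx d) (PowerSeries ℂ)}
    (hcc : ∀ p q, PowerSeries.constantCoeff (C p q) = 0)
    (hRS : RS d (· = α) C) (hCS : CS d (· = α) C) :
    ((1 - C)⁻¹ + blockId d α - 1) = blockId d α + (C + C * (1 - C)⁻¹ * C) ∧
    (1 - C) * ((1 - C)⁻¹ + blockId d α - 1) = blockId d α ∧
    ((1 - C)⁻¹ + blockId d α - 1) * (1 - C) = blockId d α := by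
  have hdet := isUnit_det_one_sub d hcc
  have h1 : (1 - C) * (1 - C)⁻¹ = 1 := Matrix.mul_nonsing_inv _ hdet
  have h2 : (1 - C)⁻¹ * (1 - C) = 1 := Matrix.nonsing_inv_mul _ hdet
  have hBC : (1 - C) + C = 1 := by abel
  have e1 : (1 - C)⁻¹ = 1 + (1 - C)⁻¹ * C := by
    calc (1 - C)⁻¹ = (1 - C)⁻¹ * ((1 - C) + C) := by rw [hBC, mul_one]
    _ = 1 + (1 - C)⁻¹ * C := by rw [mul_add, h2]
  have e2 : (1 - C)⁻¹ = 1 + C * (1 - C)⁻¹ := by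
    calc (1 - C)⁻¹ = ((1 - C) + C) * (1 - C)⁻¹ := by rw [hBC, one_mul]
    _ = 1 + C * (1 - C)⁻¹ := by rw [add_mul, h1]
  have hCb : C * blockId d α = C := mul_blockId_of_CS d hCS
  have hbC : blockId d α * C = C := blockId_mul_of_RS d hRS
  have e4 : (1 - C)⁻¹ * C = C + C * (1 - C)⁻¹ * C := by
    conv_lhs => rw [e2]
    rw [add_mul, one_mul, mul_assoc]
  have e3 : (1 - C)⁻¹ = 1 + (C + C * (1 - C)⁻¹ * C) := by
    conv_lhs => rw [e1, e4]
  refine ⟨?_, ?_, ?_⟩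
  · conv_lhs => rw [e3]
    abel
  · rw [mul_sub, mul_add, h1, mul_one]
    have hb : (1 - C) * blockId d α = blockId d α - C := by
      rw [sub_mul, one_mul, hCb]
    rw [hb]; abel
  · rw [sub_mul, add_mul, h2, one_mul]
    have hb : blockId d α * (1 - C) = blockId d α - C := by
      rw [mul_sub, mul_one, hbC]
    rw [hb]; abel

end Aux3
section Aux4
set_option linter.unusedSectionVars false
set_option maxHeartbeats 1000000

variable {V : Type} [Fintype V] [DecidableEq V] (E : V → V → Prop) (d : V → ℕ)
    (wt : ∀ ν μ : V, Matrix (Fin (d ν)) (Fin (d μ)) ℂ)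

lemma FMgAux_supp (n : ℕ) (S : Finset V) (α : V) :
    RS d (· = α) (FMgAux E d wt n S α) ∧ CS d (· = α) (FMgAux E d wt n S α) := by
  cases n with
  | zero => exact ⟨RS.zero, CS.zero⟩
  | succ n =>
      rw [FMgAux_succ]
      set C := cycSum E d wt (FMgAux E d wt n) S α with hC
      obtain ⟨he, -, -⟩ := core_inv d (cc_cycSum E d wt _ S α)
        (RS_cycSum E d wt _ S α) (CS_cycSum E d wt _ S α)
      rw [he]
      constructor
      · exact (RS_blockId d α).add ((RS_cycSum E d wt _ S α).add
          (((RS_cycSum E d wt _ S α).mul _).mul _))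
      · exact (CS_blockId d α).add ((CS_cycSum E d wt _ S α).add
          ((CS_cycSum E d wt _ S α).mul _))

lemma FMg_supp (S : Finset V) (α : V) :
    RS d (· = α) (FMg E d wt S α) ∧ CS d (· = α) (FMg E d wt S α) :=
  FMgAux_supp E d wt S.card S α

lemma FMgAux_inv (n : ℕ) (S : Finset V) (α : V) :
    (1 - cycSum E d wt (FMgAux E d wt n) S α) * FMgAux E d wt (n + 1) S α = blockId d α ∧
    FMgAux E d wt (n + 1) S α * (1 - cycSum E d wt (FMgAux E d wt n) S α) = blockId d α := by
  rw [FMgAux_succ]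
  obtain ⟨-, h1, h2⟩ := core_inv d (cc_cycSum E d wt (FMgAux E d wt n) S α)
    (RS_cycSum E d wt _ S α) (CS_cycSum E d wt _ S α)
  exact ⟨h1, h2⟩

lemma cycG_congr {F F' : Finset V → V → Matrix (BIdx d) (BIdx d) (PowerSeries ℂ)} (α : V) :
    ∀ (c : List V) (T : Finset V) (prev : V), c.Nodup → (∀ v ∈ c, v ∈ T) →
      (∀ T' v, T' ⊆ T → v ∈ T' → F T' v = F' T' v) →
      cycG d wt F α T prev c = cycG d wt F' α T prev c := by
  intro c
  induction c with
  | nil => intro T prev _ _ _; rfl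
  | cons v r ih =>
      intro T prev hnd hsub hFF
      rw [cycG, cycG]
      have hv : v ∈ T := hsub v (List.mem_cons_self)
      rw [hFF T v (subset_refl T) hv]
      congr 1
      congr 1
      refine ih (T.erase v) v (List.Nodup.of_cons hnd) ?_ ?_
      · intro u hu
        refine Finset.mem_erase.mpr ⟨?_, hsub u (List.mem_cons_of_mem v hu)⟩
        rintro rfl
        exact (List.nodup_cons.mp hnd).1 hu
      · intro T' u hT' hu
        exact hFF T' u (hT'.trans (Finset.erase_subset _ _)) hu

lemma FMgAux_stab : ∀ n : ℕ, ∀ (S : Finset V) (α : V), α ∈ S → S.card ≤ n →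
    FMgAux E d wt n S α = FMg E d wt S α := by
  intro n
  induction n using Nat.strong_induction_on with
  | _ n IH =>
    intro S α hα hcard
    have hpos : 0 < S.card := Finset.card_pos.mpr ⟨α, hα⟩
    obtain ⟨m, hm⟩ := Nat.exists_eq_succ_of_ne_zero (Nat.pos_iff_ne_zero.mp hpos)
    obtain ⟨k, rfl⟩ : ∃ k, n = k + 1 :=
      Nat.exists_eq_succ_of_ne_zero (by omega)
    rw [FMg, hm, FMgAux_succ, FMgAux_succ]
    have hsum : cycSum E d wt (FMgAux E d wt k) S α
        = cycSum E d wt (FMgAux E d wt m) S α := by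
      refine Finset.sum_congr rfl fun c hc => ?_
      obtain ⟨hnd, hαc, hcS, -⟩ := (mem_cycFinset E).mp hc
      congr 1
      have hcard' : (S.erase α).card = m := by
        rw [Finset.card_erase_of_mem hα, hm]; rfl
      refine cycG_congr d wt α c (S.erase α) α hnd ?_ ?_
      · intro v hv
        exact Finset.mem_erase.mpr ⟨fun h => hαc (h ▸ hv), hcS v hv⟩
      · intro T' v hT' hv
        have hT'card : T'.card ≤ m := hcard' ▸ Finset.card_le_card hT'
        have h1 : FMgAux E d wt k T' v = FMg E d wt T' v :=
          IH k (by omega) T' v hv (by omega)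
        have h2 : FMgAux E d wt m T' v = FMg E d wt T' v :=
          IH m (by omega) T' v hv hT'card
        rw [h1, h2]
    rw [hsum]

lemma FMg_inv (S : Finset V) (α : V) (hα : α ∈ S) :
    (1 - cycSum E d wt (FMg E d wt) S α) * FMg E d wt S α = blockId d α ∧
    FMg E d wt S α * (1 - cycSum E d wt (FMg E d wt) S α) = blockId d α := by
  have hpos : 0 < S.card := Finset.card_pos.mpr ⟨α, hα⟩
  obtain ⟨m, hm⟩ := Nat.exists_eq_succ_of_ne_zero (Nat.pos_iff_ne_zero.mp hpos)
  have hsum : cycSum E d wt (FMgAux E d wt m) S α = cycSum E d wt (FMg E d wt) S α := by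
    refine Finset.sum_congr rfl fun c hc => ?_
    obtain ⟨hnd, hαc, hcS, -⟩ := (mem_cycFinset E).mp hc
    congr 1
    have hcard' : (S.erase α).card = m := by
      rw [Finset.card_erase_of_mem hα, hm]; rfl
    refine cycG_congr d wt α c (S.erase α) α hnd ?_ ?_
    · intro v hv
      exact Finset.mem_erase.mpr ⟨fun h => hαc (h ▸ hv), hcS v hv⟩
    · intro T' v hT' hv
      have hT'card : T'.card ≤ m := hcard' ▸ Finset.card_le_card hT'
      exact FMgAux_stab E d wt m T' v hv hT'card
  have h := FMgAux_inv E d wt m S α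
  rw [hsum] at h
  have hFMg : FMgAux E d wt (m + 1) S α = FMg E d wt S α := by
    rw [FMg, hm]
  rw [hFMg] at h
  exact h

end Aux4
section Aux5
set_option linter.unusedSectionVars false
set_option maxHeartbeats 1000000
set_option synthInstance.maxHeartbeats 400000

variable {V : Type} [Fintype V] [DecidableEq V] (E : V → V → Prop) (d : V → ℕ)
    (wt : ∀ ν μ : V, Matrix (Fin (d ν)) (Fin (d μ)) ℂ)

/-- The set of (vertex sequences of) simple paths inside `S`. -/
def pathSet (E : V → V → Prop) (S : Finset V) : Set (List V) :=
  {L : List V | L ≠ [] ∧ L.Nodup ∧ (∀ v ∈ L, v ∈ S) ∧ L.Chain' E}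

lemma pathSet_finite (S : Finset V) : (pathSet E S).Finite :=
  (List.finite_length_le V (Fintype.card V)).subset fun _ hl => hl.2.1.length_le_card

/-- The finite set of simple paths inside `S`. -/
def pathFinset (E : V → V → Prop) (S : Finset V) : Finset (List V) :=
  (pathSet_finite E S).toFinset

lemma mem_pathFinset {S : Finset V} {L : List V} :
    L ∈ pathFinset E S ↔ L ≠ [] ∧ L.Nodup ∧ (∀ v ∈ L, v ∈ S) ∧ L.Chain' E := by
  rw [pathFinset, Set.Finite.mem_toFinset]; exact Iff.rfl

/-- The summand of a simple path, with ambient vertex set `S`. -/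
def pathF (E : V → V → Prop) (d : V → ℕ)
    (wt : ∀ ν μ : V, Matrix (Fin (d ν)) (Fin (d μ)) ℂ) (S : Finset V) :
    List V → Matrix (BIdx d) (BIdx d) (PowerSeries ℂ)
  | [] => 0
  | v :: r => (PowerSeries.X : PowerSeries ℂ) ^ r.length • pathG E d wt S v r

lemma pathF_univ (L : List V) : pathF E d wt Finset.univ L = pathTerm E d wt L := by
  cases L <;> rfl

lemma pathF_singleton (S : Finset V) (α : V) : pathF E d wt S [α] = FMg E d wt S α := by
  simp [pathF, pathG]

lemma pathF_cons (S : Finset V) (α v : V) (r : List V) :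
    pathF E d wt S (α :: v :: r) =
      pathF E d wt (S.erase α) (v :: r) *
        ((PowerSeries.X : PowerSeries ℂ) • embW d wt v α) * FMg E d wt S α := by
  simp only [pathF, pathG, List.length_cons]
  rw [Matrix.smul_mul, Matrix.mul_smul, smul_smul, ← pow_succ, Matrix.smul_mul]

lemma RS_pathG : ∀ (r : List V) (T : Finset V) (prev : V),
    RS d (· = r.getLastD prev) (pathG E d wt T prev r) := by
  intro r
  induction r with
  | nil => intro T prev; exact (FMg_supp E d wt T prev).1
  | cons v r ih =>
      intro T prev
      rw [pathG, List.getLastD_cons]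
      exact ((ih (T.erase prev) v).mul _).mul _

lemma CS_pathG : ∀ (r : List V) (T : Finset V) (prev : V),
    CS d (· = prev) (pathG E d wt T prev r) := by
  intro r
  induction r with
  | nil => intro T prev; exact (FMg_supp E d wt T prev).2
  | cons v r ih =>
      intro T prev
      rw [pathG]
      exact CS.mul (FMg_supp E d wt T prev).2 _

lemma RS_pathF_cons (S : Finset V) (v : V) (r : List V) :
    RS d (· = r.getLastD v) (pathF E d wt S (v :: r)) :=
  (RS_pathG E d wt r S v).smul _

lemma CS_pathF_cons (S : Finset V) (v : V) (r : List V) :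
    CS d (· = v) (pathF E d wt S (v :: r)) :=
  (CS_pathG E d wt r S v).smul _

lemma cycG_eq_pathG (α : V) : ∀ (r : List V) (T : Finset V) (prev v : V),
    cycG d wt (FMg E d wt) α T prev (v :: r) =
      embW d wt α (r.getLastD v) * pathG E d wt T v r * embW d wt v prev := by
  intro r
  induction r with
  | nil =>
      intro T prev v
      rw [cycG, cycG, pathG, List.getLastD_nil]
  | cons u r ih =>
      intro T prev v
      rw [cycG, ih (T.erase v) v u, pathG, List.getLastD_cons]
      simp only [mul_assoc]

lemma chain_append_singleton (α : V) : ∀ (r : List V) (v : V),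
    List.Chain E v (r ++ [α]) ↔ (List.Chain' E (v :: r) ∧ E (r.getLastD v) α) := by
  intro r
  induction r with
  | nil => intro v; simp [List.Chain, List.Chain']
  | cons u r ih =>
      intro v
      simp only [List.Chain, List.Chain'] at ih ⊢
      rw [List.cons_append, List.isChain_cons_cons, ih u, List.isChain_cons_cons, List.getLastD_cons]
      tauto

/-- The global path-sum matrix for the vertex set `S`. -/
def QS (E : V → V → Prop) (d : V → ℕ)
    (wt : ∀ ν μ : V, Matrix (Fin (d ν)) (Fin (d μ)) ℂ) (S : Finset V) :
    Matrix (BIdx d) (BIdx d) (PowerSeries ℂ) :=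
  (∑ L ∈ pathFinset E S, pathF E d wt S L) + offId d S

end Aux5
section Aux6
set_option linter.unusedSectionVars false
set_option maxHeartbeats 1000000
set_option synthInstance.maxHeartbeats 400000

variable {V : Type} [Fintype V] [DecidableEq V] (E : V → V → Prop) (d : V → ℕ)
    (wt : ∀ ν μ : V, Matrix (Fin (d ν)) (Fin (d μ)) ℂ)

lemma getLastD_cons_mem : ∀ (r : List V) (v : V), r.getLastD v ∈ v :: r := by
  intro r
  induction r with
  | nil => intro v; simp
  | cons u r ih =>
      intro v
      rw [List.getLastD_cons]
      exact List.mem_cons_of_mem v (ih u)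

lemma getLast?_cons' : ∀ (r : List V) (v : V), (v :: r).getLast? = some (r.getLastD v) := by
  intro r
  induction r with
  | nil => intro v; rfl
  | cons u r ih =>
      intro v
      rw [List.getLastD_cons, ← ih u]
      rfl

lemma mul_offId_of_CS_mem {a : V} {S : Finset V} {X : Matrix (BIdx d) (BIdx d) (PowerSeries ℂ)}
    (hX : CS d (· = a) X) (ha : a ∈ S) : X * offId d S = 0 :=
  mul_eq_zero_disj hX (RS_offId d S) fun v hv hnv => hnv (hv ▸ ha)

lemma mul_offId_of_CS_not_mem {a : V} {S : Finset V}
    {X : Matrix (BIdx d) (BIdx d) (PowerSeries ℂ)}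
    (hX : CS d (· = a) X) (ha : a ∉ S) : X * offId d S = X := by
  have h : offId d S = 1 - ∑ v ∈ S, blockId d v := by
    rw [← DSum_add_offId d S]; abel
  rw [h, mul_sub, mul_one, Finset.mul_sum]
  have h2 : ∑ v ∈ S, X * blockId d v = 0 :=
    Finset.sum_eq_zero fun v hv => mul_blockId_of_CS_ne d hX fun h' => ha (h' ▸ hv)
  rw [h2, sub_zero]

lemma offId_eq_diagonal (S : Finset V) :
    offId d S = Matrix.diagonal (fun p : BIdx d => if p.1 ∈ S then 0 else 1) := by
  refine Matrix.ext fun p q => ?_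
  by_cases hpq : p = q
  · subst hpq; simp [offId, Matrix.diagonal_apply, Matrix.one_apply]
  · simp [offId, Matrix.diagonal_apply_ne _ hpq, Matrix.one_apply_ne hpq]

lemma offId_mul_offId (S : Finset V) : offId d S * offId d S = offId d S := by
  rw [offId_eq_diagonal, Matrix.diagonal_mul_diagonal]
  refine congrArg _ (funext fun p => ?_)
  by_cases h : p.1 ∈ S <;> simp [h]

lemma RS_W (S : Finset V) (α : V) :
    RS d (· ∈ S.erase α) ((1 - blockId d α) * (MzS E d wt S * blockId d α)) := by
  rw [one_sub_blockId_mul]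
  intro p q h
  simp only [Matrix.of_apply] at h
  by_cases hp : p.1 = α
  · simp [hp] at h
  · rw [if_neg hp] at h
    exact Finset.mem_erase.mpr ⟨hp, (RS_MzS E d wt S).mul _ p q h⟩

lemma CS_W (S : Finset V) (α : V) :
    CS d (· = α) ((1 - blockId d α) * (MzS E d wt S * blockId d α)) :=
  CS.mul ((CS_blockId d α).mul _) _

lemma blockId_mul_one_sub {v α : V} (hv : v ≠ α) :
    blockId d v * (1 - blockId d α) = blockId d v := by
  rw [mul_sub, mul_one, blockId_mul_of_RS_ne d (RS_blockId d α) hv, sub_zero]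

lemma smul_mul3 (a b c : PowerSeries ℂ) (A B C : Matrix (BIdx d) (BIdx d) (PowerSeries ℂ)) :
    (a • A) * (b • B) * (c • C) = (a * b * c) • (A * B * C) := by
  simp only [Matrix.mul_smul, Matrix.smul_mul, smul_smul]
  congr 1
  ring

end Aux6
section Aux7
set_option linter.unusedSectionVars false
set_option maxHeartbeats 1000000
set_option synthInstance.maxHeartbeats 400000

variable {V : Type} [Fintype V] [DecidableEq V] (E : V → V → Prop) (d : V → ℕ)
    (wt : ∀ ν μ : V, Matrix (Fin (d ν)) (Fin (d μ)) ℂ)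

open Classical in
lemma QS_mul_W (S : Finset V) (α : V) (hα : α ∈ S) :
    QS E d wt (S.erase α) * ((1 - blockId d α) * (MzS E d wt S * blockId d α)) =
      ∑ L ∈ (pathFinset E (S.erase α)).filter (fun L => E α (L.headD α)),
        pathF E d wt (S.erase α) L *
          ((PowerSeries.X : PowerSeries ℂ) • embW d wt (L.headD α) α) := by
  classical
  set W := (1 - blockId d α) * (MzS E d wt S * blockId d α) with hW
  rw [QS, add_mul]
  have hoff : offId d (S.erase α) * W = 0 := by
    refine mul_eq_zero_disj (CS_offId d _) (RS_W E d wt S α) fun v hv hv' => hv hv'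
  rw [hoff, add_zero, Finset.sum_mul, Finset.sum_filter]
  refine Finset.sum_congr rfl fun L hL => ?_
  obtain ⟨hne, hnd, hsub, hch⟩ := (mem_pathFinset E).mp hL
  cases L with
  | nil => exact absurd rfl hne
  | cons v r =>
      have hv : v ∈ S.erase α := hsub v (List.mem_cons_self)
      have hvne : v ≠ α := (Finset.mem_erase.mp hv).1
      have hvS : v ∈ S := (Finset.mem_erase.mp hv).2
      have hCSL := CS_pathF_cons E d wt (S.erase α) v r
      have h1 : pathF E d wt (S.erase α) (v :: r) * W
          = pathF E d wt (S.erase α) (v :: r) * (blockId d v * W) := by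
        conv_rhs => rw [← mul_assoc, mul_blockId_of_CS d hCSL]
      have h2 : blockId d v * W = blockId d v * MzS E d wt S * blockId d α := by
        rw [hW, ← mul_assoc, blockId_mul_one_sub d hvne, mul_assoc]
      rw [h1, h2, List.headD_cons]
      by_cases hE : E α v
      · rw [if_pos hE, blockId_MzS_blockId_pos E d wt hvS hα hE]
      · rw [if_neg hE, blockId_MzS_blockId_neg E d wt hE, mul_zero]

open Classical in
lemma filterHead_eq (S : Finset V) (α : V) (hα : α ∈ S) :
    (pathFinset E S).filter (fun L => L.headD α = α) =
      insert [α] (((pathFinset E (S.erase α)).filter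
        (fun L => E α (L.headD α))).image (List.cons α)) := by
  classical
  ext L
  simp only [Finset.mem_filter, Finset.mem_insert, Finset.mem_image]
  constructor
  · rintro ⟨hL, hhead⟩
    obtain ⟨hne, hnd, hsub, hch⟩ := (mem_pathFinset E).mp hL
    cases L with
    | nil => exact absurd rfl hne
    | cons v r =>
        rw [List.headD_cons] at hhead
        subst hhead
        cases r with
        | nil => exact Or.inl rfl
        | cons u r' =>
            refine Or.inr ⟨u :: r', ⟨?_, ?_⟩, rfl⟩
            · obtain ⟨hvu, hch'⟩ := List.isChain_cons_cons.mp hch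
              refine (mem_pathFinset E).mpr
                ⟨List.cons_ne_nil _ _, (List.nodup_cons.mp hnd).2, ?_, hch'⟩
              intro x hx
              refine Finset.mem_erase.mpr ⟨?_, hsub x (List.mem_cons_of_mem _ hx)⟩
              rintro rfl
              exact (List.nodup_cons.mp hnd).1 hx
            · rw [List.headD_cons]; exact (List.isChain_cons_cons.mp hch).1
  · rintro (rfl | ⟨L', hL', rfl⟩)
    · refine ⟨(mem_pathFinset E).mpr ⟨List.cons_ne_nil _ _, List.nodup_singleton α, ?_, ?_⟩, ?_⟩
      · intro x hx; rw [List.mem_singleton] at hx; exact hx ▸ hα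
      · exact List.isChain_singleton α
      · rw [List.headD_cons]
    · obtain ⟨hL', hhead⟩ := hL'
      obtain ⟨hne, hnd, hsub, hch⟩ := (mem_pathFinset E).mp hL'
      cases L' with
      | nil => exact absurd rfl hne
      | cons u r =>
          rw [List.headD_cons] at hhead
          refine ⟨(mem_pathFinset E).mpr ⟨List.cons_ne_nil _ _, ?_, ?_, ?_⟩, ?_⟩
          · refine List.nodup_cons.mpr ⟨?_, hnd⟩
            intro hx
            exact (Finset.mem_erase.mp (hsub α hx)).1 rfl
          · intro x hx
            rcases List.mem_cons.mp hx with rfl | hx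
            · exact hα
            · exact (Finset.mem_erase.mp (hsub x hx)).2
          · exact List.isChain_cons_cons.mpr ⟨hhead, hch⟩
          · rw [List.headD_cons]

open Classical in
lemma QS_mul_blockId (S : Finset V) (α : V) (hα : α ∈ S) :
    QS E d wt S * blockId d α =
      FMg E d wt S α +
        QS E d wt (S.erase α) * ((1 - blockId d α) * (MzS E d wt S * blockId d α)) *
          FMg E d wt S α := by
  classical
  rw [QS, add_mul]
  have hoffB : offId d S * blockId d α = 0 :=
    mul_eq_zero_disj (CS_offId d S) (RS_blockId d α) fun v hv hv' => hv (hv' ▸ hα)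
  rw [hoffB, add_zero, Finset.sum_mul]
  have hterm : ∀ L ∈ pathFinset E S,
      pathF E d wt S L * blockId d α =
        if L.headD α = α then pathF E d wt S L else 0 := by
    intro L hL
    obtain ⟨hne, -, -, -⟩ := (mem_pathFinset E).mp hL
    cases L with
    | nil => exact absurd rfl hne
    | cons v r =>
        rw [List.headD_cons]
        by_cases hv : v = α
        · subst hv
          rw [if_pos rfl, mul_blockId_of_CS d (CS_pathF_cons E d wt S v r)]
        · rw [if_neg hv, mul_blockId_of_CS_ne d (CS_pathF_cons E d wt S v r) (Ne.symm hv)]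
  rw [Finset.sum_congr rfl hterm, ← Finset.sum_filter, filterHead_eq E S α hα]
  have hnot : [α] ∉ ((pathFinset E (S.erase α)).filter
      (fun L => E α (L.headD α))).image (List.cons α) := by
    rw [Finset.mem_image]
    rintro ⟨L', hL', hcons⟩
    rw [Finset.mem_filter] at hL'
    have : L' = [] := by injection hcons
    exact ((mem_pathFinset E).mp hL'.1).1 this
  rw [Finset.sum_insert hnot, pathF_singleton]
  congr 1
  rw [Finset.sum_image (fun x _ y _ h => by injection h), QS_mul_W E d wt S α hα,
    Finset.sum_mul]
  refine Finset.sum_congr rfl fun L hL => ?_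
  rw [Finset.mem_filter] at hL
  obtain ⟨hne, -, -, -⟩ := (mem_pathFinset E).mp hL.1
  cases L with
  | nil => exact absurd rfl hne
  | cons v r => rw [pathF_cons, List.headD_cons]

end Aux7
section Aux8
set_option linter.unusedSectionVars false
set_option maxHeartbeats 1000000
set_option synthInstance.maxHeartbeats 400000

variable {V : Type} [Fintype V] [DecidableEq V] (E : V → V → Prop) (d : V → ℕ)
    (wt : ∀ ν μ : V, Matrix (Fin (d ν)) (Fin (d μ)) ℂ)

open Classical in
lemma cyc_decomp (S : Finset V) (α : V) (hα : α ∈ S) :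
    cycSum E d wt (FMg E d wt) S α =
      blockId d α * MzS E d wt S * blockId d α +
      blockId d α * MzS E d wt S *
        (QS E d wt (S.erase α) *
          ((1 - blockId d α) * (MzS E d wt S * blockId d α))) := by
  classical
  set g : List V → Matrix (BIdx d) (BIdx d) (PowerSeries ℂ) := fun L =>
    (PowerSeries.X : PowerSeries ℂ) ^ (L.length + 1) •
      (embW d wt α (L.getLastD α) * pathG E d wt (S.erase α) (L.headD α) L.tail *
        embW d wt (L.headD α) α) with hg
  set TT : Finset (List V) := (pathFinset E (S.erase α)).filter
    (fun L => E α (L.headD α) ∧ E (L.getLastD α) α) with hTT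
  -- second summand equals ∑ L ∈ TT, g L
  have hsum2 : blockId d α * MzS E d wt S *
      (QS E d wt (S.erase α) * ((1 - blockId d α) * (MzS E d wt S * blockId d α)))
      = ∑ L ∈ TT, g L := by
    rw [QS_mul_W E d wt S α hα, Finset.mul_sum]
    have hterm : ∀ L ∈ (pathFinset E (S.erase α)).filter (fun L => E α (L.headD α)),
        blockId d α * MzS E d wt S *
          (pathF E d wt (S.erase α) L *
            ((PowerSeries.X : PowerSeries ℂ) • embW d wt (L.headD α) α))
        = if E (L.getLastD α) α then g L else 0 := by
      intro L hL
      rw [Finset.mem_filter] at hL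
      obtain ⟨hne, hnd, hsub, hch⟩ := (mem_pathFinset E).mp hL.1
      cases L with
      | nil => exact absurd rfl hne
      | cons v r =>
          have hm : r.getLastD v ∈ S := by
            have := hsub _ (getLastD_cons_mem r v)
            exact (Finset.mem_erase.mp this).2
          have hpf : pathF E d wt (S.erase α) (v :: r)
              = blockId d (r.getLastD v) * pathF E d wt (S.erase α) (v :: r) :=
            (blockId_mul_of_RS d (RS_pathF_cons E d wt (S.erase α) v r)).symm
          have hassoc : blockId d α * MzS E d wt S *
              (pathF E d wt (S.erase α) (v :: r) *
                ((PowerSeries.X : PowerSeries ℂ) • embW d wt ((v :: r).headD α) α))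
              = (blockId d α * MzS E d wt S * blockId d (r.getLastD v)) *
                  pathF E d wt (S.erase α) (v :: r) *
                  ((PowerSeries.X : PowerSeries ℂ) • embW d wt ((v :: r).headD α) α) := by
            conv_lhs => rw [hpf]
            simp only [mul_assoc]
          rw [hassoc]
          simp only [List.headD_cons, List.getLastD_cons, List.tail_cons, List.length_cons, hg]
          by_cases hE : E (r.getLastD v) α
          · rw [if_pos hE, blockId_MzS_blockId_pos E d wt hα hm hE]
            show (PowerSeries.X : PowerSeries ℂ) • embW d wt α (r.getLastD v) *
                ((PowerSeries.X : PowerSeries ℂ) ^ r.length • pathG E d wt (S.erase α) v r) *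
                ((PowerSeries.X : PowerSeries ℂ) • embW d wt v α) = _
            rw [smul_mul3]
            congr 1
            ring
          · rw [if_neg hE, blockId_MzS_blockId_neg E d wt hE, zero_mul, zero_mul]
    rw [Finset.sum_congr rfl hterm, ← Finset.sum_filter, hTT, Finset.filter_filter]
  rw [hsum2]
  -- split the cycle sum
  have hsplit := Finset.sum_filter_add_sum_filter_not (cycFinset E S α) (fun c => c = [])
    (fun c => (PowerSeries.X : PowerSeries ℂ) ^ (c.length + 1) •
      cycG d wt (FMg E d wt) α (S.erase α) α c)
  rw [cycSum, ← hsplit]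
  congr 1
  · -- the empty cycle part
    by_cases hloop : E α α
    · have hmem : ([] : List V) ∈ cycFinset E S α := by
        refine (mem_cycFinset E).mpr ⟨List.nodup_nil, by simp, by simp, ?_⟩
        simpa using List.Chain.cons hloop List.Chain.nil
      have hfil : (cycFinset E S α).filter (fun c => c = []) = {[]} := by
        ext c
        simp only [Finset.mem_filter, Finset.mem_singleton]
        exact ⟨fun h => h.2, fun h => ⟨h ▸ hmem, h⟩⟩
      rw [hfil, Finset.sum_singleton, blockId_MzS_blockId_pos E d wt hα hα hloop]
      show (PowerSeries.X : PowerSeries ℂ) ^ (0 + 1) • embW d wt α α = _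
      rw [zero_add, pow_one]
    · have hfil : (cycFinset E S α).filter (fun c => c = []) = ∅ := by
        ext c
        simp only [Finset.mem_filter, Finset.notMem_empty, iff_false, not_and]
        intro hc rfl'
        subst rfl'
        obtain ⟨-, -, -, hch⟩ := (mem_cycFinset E).mp hc
        rw [List.nil_append] at hch
        exact hloop (List.chain_cons.mp hch).1
      rw [hfil, Finset.sum_empty, blockId_MzS_blockId_neg E d wt hloop]
  · -- the nonempty cycle part
    have hfil : (cycFinset E S α).filter (fun c => ¬ c = []) = TT := by
      ext c
      simp only [Finset.mem_filter, mem_cycFinset, mem_pathFinset, hTT]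
      constructor
      · rintro ⟨⟨hnd, hαc, hsub, hch⟩, hne⟩
        cases c with
        | nil => exact absurd rfl hne
        | cons v r =>
            rw [List.cons_append] at hch
            obtain ⟨hαv, hch2⟩ := List.chain_cons.mp hch
            obtain ⟨hch', hlast⟩ := (chain_append_singleton E α r v).mp hch2
            refine ⟨⟨List.cons_ne_nil _ _, hnd, ?_, hch'⟩, ?_, ?_⟩
            · intro x hx
              refine Finset.mem_erase.mpr ⟨?_, hsub x hx⟩
              rintro rfl
              exact hαc hx
            · rw [List.headD_cons]; exact hαv
            · rw [List.getLastD_cons]; exact hlast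
      · rintro ⟨⟨hne, hnd, hsub, hch'⟩, hαh, hlast⟩
        cases c with
        | nil => exact absurd rfl hne
        | cons v r =>
            rw [List.headD_cons] at hαh
            rw [List.getLastD_cons] at hlast
            refine ⟨⟨hnd, ?_, ?_, ?_⟩, List.cons_ne_nil _ _⟩
            · intro hx
              exact (Finset.mem_erase.mp (hsub α hx)).1 rfl
            · intro x hx
              exact (Finset.mem_erase.mp (hsub x hx)).2
            · rw [List.cons_append]
              exact List.chain_cons.mpr ⟨hαh, (chain_append_singleton E α r v).mpr ⟨hch', hlast⟩⟩
    rw [hfil]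
    refine Finset.sum_congr rfl fun c hc => ?_
    rw [hTT, Finset.mem_filter] at hc
    obtain ⟨hne, -, -, -⟩ := (mem_pathFinset E).mp hc.1
    cases c with
    | nil => exact absurd rfl hne
    | cons v r =>
        rw [cycG_eq_pathG E d wt α r (S.erase α) α v, hg]
        simp only [List.headD_cons, List.getLastD_cons, List.tail_cons, List.length_cons]

end Aux8
section Aux9
set_option linter.unusedSectionVars false
set_option maxHeartbeats 1000000
set_option synthInstance.maxHeartbeats 400000

variable {V : Type} [Fintype V] [DecidableEq V] (E : V → V → Prop) (d : V → ℕ)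
    (wt : ∀ ν μ : V, Matrix (Fin (d ν)) (Fin (d μ)) ℂ)

open Classical in
lemma key_step (S : Finset V) (α : V) (hα : α ∈ S)
    (hIH : (1 - MzS E d wt (S.erase α)) * QS E d wt (S.erase α) = 1) :
    (1 - MzS E d wt S) * (QS E d wt S * blockId d α) = blockId d α := by
  classical
  have hK1 := QS_mul_blockId E d wt S α hα
  have hK2 := cyc_decomp E d wt S α hα
  have hErase := MzS_erase E d wt S α
  have hFi := (FMg_inv E d wt S α hα).1
  have hMz'G : MzS E d wt (S.erase α) * FMg E d wt S α = 0 :=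
    mul_eq_zero_disj (CS_MzS E d wt _) (FMg_supp E d wt S α).1
      fun v hv hq => (Finset.mem_erase.mp hv).1 hq
  have hBG : blockId d α * FMg E d wt S α = FMg E d wt S α :=
    blockId_mul_of_RS d (FMg_supp E d wt S α).1
  have hWQ : ((1 - blockId d α) * (MzS E d wt S * blockId d α)) * QS E d wt (S.erase α)
      = (1 - blockId d α) * (MzS E d wt S * blockId d α) := by
    rw [QS, mul_add]
    have hz : ((1 - blockId d α) * (MzS E d wt S * blockId d α)) *
        ∑ L ∈ pathFinset E (S.erase α), pathF E d wt (S.erase α) L = 0 := by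
      rw [Finset.mul_sum]
      refine Finset.sum_eq_zero fun L hL => ?_
      obtain ⟨hne', hnd, hsub, -⟩ := (mem_pathFinset E).mp hL
      cases L with
      | nil => exact absurd rfl hne'
      | cons v r =>
          refine mul_eq_zero_disj (CS_W E d wt S α) (RS_pathF_cons E d wt _ v r)
            fun x hx1 hx2 => ?_
          have hmem := hsub _ (getLastD_cons_mem r v)
          exact (Finset.mem_erase.mp hmem).1 (hx2.symm.trans hx1)
    rw [hz, zero_add]
    exact mul_offId_of_CS_not_mem d (CS_W E d wt S α) (Finset.notMem_erase α S)
  have hWW : ((1 - blockId d α) * (MzS E d wt S * blockId d α)) *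
      ((1 - blockId d α) * (MzS E d wt S * blockId d α)) = 0 :=
    mul_eq_zero_disj (CS_W E d wt S α) (RS_W E d wt S α)
      fun x hx1 hx2 => (Finset.mem_erase.mp hx2).1 hx1
  obtain ⟨M, hM⟩ : ∃ M, MzS E d wt S = M := ⟨_, rfl⟩
  obtain ⟨M', hM'⟩ : ∃ M', MzS E d wt (S.erase α) = M' := ⟨_, rfl⟩
  obtain ⟨B, hB⟩ : ∃ B, blockId d α = B := ⟨_, rfl⟩
  obtain ⟨G, hGe⟩ : ∃ G, FMg E d wt S α = G := ⟨_, rfl⟩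
  obtain ⟨Q, hQ⟩ : ∃ Q, QS E d wt S = Q := ⟨_, rfl⟩
  obtain ⟨Q', hQ'⟩ : ∃ Q', QS E d wt (S.erase α) = Q' := ⟨_, rfl⟩
  obtain ⟨Cm, hCm⟩ : ∃ Cm, cycSum E d wt (FMg E d wt) S α = Cm := ⟨_, rfl⟩
  rw [hM, hB, hGe, hQ, hQ'] at hK1
  rw [hCm, hM, hB, hQ'] at hK2
  rw [hM', hM, hB] at hErase
  rw [hCm, hGe, hB] at hFi
  rw [hM', hGe] at hMz'G
  rw [hB, hGe] at hBG
  rw [hM, hB, hQ'] at hWQ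
  rw [hM, hB] at hWW
  rw [hM', hQ'] at hIH
  rw [hM, hB, hQ]
  have hMz'Q : M' * Q' = Q' - 1 := by
    rw [sub_mul, one_mul] at hIH
    rw [← hIH]; abel
  set W := (1 - B) * (M * B) with hW
  have hdecomp : M = M' + B * M + W := by rw [hErase, hW]; noncomm_ring
  have hMU : M * (Q' * W) = Q' * W - W + B * M * (Q' * W) := by
    conv_lhs => rw [hdecomp]
    rw [add_mul, add_mul]
    have h1 : M' * (Q' * W) = Q' * W - W := by
      rw [← mul_assoc, hMz'Q, sub_mul, one_mul]
    have h2 : W * (Q' * W) = 0 := by rw [← mul_assoc, hWQ, hWW]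
    rw [h1, h2, add_zero]
  have hMG : M * G = B * M * G + W * G := by
    conv_lhs => rw [hdecomp]
    rw [add_mul, add_mul, hMz'G, zero_add]
  have hBMBG : B * M * G = B * M * B * G := by
    rw [mul_assoc (B * M) B G, hBG]
  calc (1 - M) * (Q * B) = (1 - M) * (G + Q' * W * G) := by rw [hK1]
    _ = G + Q' * W * G - M * G - M * (Q' * W * G) := by noncomm_ring
    _ = G - (B * M * B + B * M * (Q' * W)) * G := by
        rw [show M * (Q' * W * G) = M * (Q' * W) * G from (mul_assoc M (Q' * W) G).symm,
          hMU, hMG, hBMBG]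
        rw [add_mul, sub_mul, add_mul]
        abel
    _ = G - Cm * G := by rw [hK2]
    _ = B := by rw [sub_mul, one_mul] at hFi; exact hFi

open Classical in
lemma main_inv (S : Finset V) : (1 - MzS E d wt S) * QS E d wt S = 1 := by
  classical
  induction S using Finset.strongInduction with
  | _ S IH =>
  rcases S.eq_empty_or_nonempty with rfl | hne
  · have h0 : MzS E d wt ∅ = 0 := Matrix.ext fun p q => by simp [MzS]
    have h1 : pathFinset E (∅ : Finset V) = ∅ := by
      ext L
      simp only [mem_pathFinset, Finset.notMem_empty, iff_false]
      rintro ⟨hne', -, hsub, -⟩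
      cases L with
      | nil => exact hne' rfl
      | cons v r => exact hsub v (List.mem_cons_self)
    have h2 : offId d (∅ : Finset V) = 1 := Matrix.ext fun p q => by simp [offId]
    rw [QS, h0, h1, h2, Finset.sum_empty, zero_add, sub_zero, one_mul]
  · have key : ∀ α ∈ S, (1 - MzS E d wt S) * (QS E d wt S * blockId d α) = blockId d α :=
      fun α hα => key_step E d wt S α hα (IH _ (Finset.erase_ssubset hα))
    have hQoff : QS E d wt S * offId d S = offId d S := by
      rw [QS, add_mul, offId_mul_offId]
      have hz : (∑ L ∈ pathFinset E S, pathF E d wt S L) * offId d S = 0 := by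
        rw [Finset.sum_mul]
        refine Finset.sum_eq_zero fun L hL => ?_
        obtain ⟨hne', -, hsub, -⟩ := (mem_pathFinset E).mp hL
        cases L with
        | nil => exact absurd rfl hne'
        | cons v r =>
            exact mul_offId_of_CS_mem d (CS_pathF_cons E d wt S v r)
              (hsub v (List.mem_cons_self))
      rw [hz, zero_add]
    have hQDS : QS E d wt S = (∑ α ∈ S, QS E d wt S * blockId d α) + offId d S := by
      calc QS E d wt S = QS E d wt S * ((∑ α ∈ S, blockId d α) + offId d S) := by
            rw [DSum_add_offId, mul_one]
        _ = (∑ α ∈ S, QS E d wt S * blockId d α) + offId d S := by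
            rw [mul_add, Finset.mul_sum, hQoff]
    have hMoff : MzS E d wt S * offId d S = 0 :=
      mul_eq_zero_disj (CS_MzS E d wt S) (RS_offId d S) fun v hv hv' => hv' hv
    calc (1 - MzS E d wt S) * QS E d wt S
        = (1 - MzS E d wt S) * ((∑ α ∈ S, QS E d wt S * blockId d α) + offId d S) := by
          rw [← hQDS]
      _ = (∑ α ∈ S, (1 - MzS E d wt S) * (QS E d wt S * blockId d α))
            + (1 - MzS E d wt S) * offId d S := by
          rw [mul_add, Finset.mul_sum]
      _ = (∑ α ∈ S, blockId d α) + offId d S := by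
          rw [Finset.sum_congr rfl key, sub_mul, one_mul, hMoff, sub_zero]
      _ = 1 := DSum_add_offId d S

end Aux9
set_option linter.unusedSectionVars false
set_option maxHeartbeats 1000000
set_option synthInstance.maxHeartbeats 400000
/-- Weighted path-sum with noncommuting matrix weights:
`Id − M(z)` is invertible over `ℂ[[z]]`, and for all vertices `α`, `ω` the
`(ω, α)` block of `(Id − M(z))⁻¹` equals the sum, over all simple paths
`π = (σ₀ σ₁ ⋯ σ_p)` from `α` to `ω`, of
`z^p · F_{V∖{σ₀,…,σ_{p-1}}}(σ_p) · w_{σ_p σ_{p-1}} ⋯ w_{σ₁ σ₀} · F_V(σ₀)`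
(for `α = ω` the only path is trivial and the summand is `F_V(α)`). -/
theorem stmt12 {V : Type} [Fintype V] [DecidableEq V] (E : V → V → Prop)
    (d : V → ℕ) (hd : ∀ ν : V, 1 ≤ d ν)
    (wt : ∀ ν μ : V, Matrix (Fin (d ν)) (Fin (d μ)) ℂ) :
    IsUnit (1 - Mz E d wt) ∧
    ∀ (α ω : V) (i : Fin (d ω)) (j : Fin (d α)),
      (1 - Mz E d wt)⁻¹ ⟨ω, i⟩ ⟨α, j⟩ =
        (∑ᶠ L ∈ {L : List V | L.Nodup ∧ L.head? = some α ∧ L.getLast? = some ω ∧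
            L.Chain' E}, pathTerm E d wt L) ⟨ω, i⟩ ⟨α, j⟩ := by
  classical
  have hmain := main_inv E d wt (Finset.univ : Finset V)
  rw [MzS_univ] at hmain
  have hQ : QS E d wt Finset.univ
      = ∑ L ∈ pathFinset E Finset.univ, pathTerm E d wt L := by
    rw [QS]
    have hoff : offId d (Finset.univ : Finset V) = 0 := Matrix.ext fun p q => by simp [offId]
    rw [hoff, add_zero]
    exact Finset.sum_congr rfl fun L _ => pathF_univ E d wt L
  rw [hQ] at hmain
  have hcomm : (∑ L ∈ pathFinset E Finset.univ, pathTerm E d wt L) * (1 - Mz E d wt) = 1 :=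
    mul_eq_one_comm.mp hmain
  constructor
  · exact ⟨⟨1 - Mz E d wt, ∑ L ∈ pathFinset E Finset.univ, pathTerm E d wt L,
      hmain, hcomm⟩, rfl⟩
  · intro α ω i j
    have hinv : (1 - Mz E d wt)⁻¹ = ∑ L ∈ pathFinset E Finset.univ, pathTerm E d wt L :=
      Matrix.inv_eq_right_inv hmain
    rw [hinv]
    have hfin : ({L : List V | L.Nodup ∧ L.head? = some α ∧ L.getLast? = some ω ∧
        L.Chain' E}).Finite :=
      (List.finite_length_le V (Fintype.card V)).subset fun _ hl => hl.1.length_le_card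
    have hconv : (∑ᶠ L ∈ {L : List V | L.Nodup ∧ L.head? = some α ∧ L.getLast? = some ω ∧
        L.Chain' E}, pathTerm E d wt L) = ∑ L ∈ hfin.toFinset, pathTerm E d wt L :=
      finsum_mem_eq_finite_toFinset_sum _ hfin
    rw [hconv, Matrix.sum_apply, Matrix.sum_apply]
    have hsub : hfin.toFinset ⊆ pathFinset E Finset.univ := by
      intro L hL
      rw [Set.Finite.mem_toFinset] at hL
      obtain ⟨hnd, hh, hl, hch⟩ := hL
      refine (mem_pathFinset E).mpr ⟨?_, hnd, fun v _ => Finset.mem_univ v, hch⟩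
      rintro rfl
      simp at hh
    refine (Finset.sum_subset hsub ?_).symm
    intro L hL hnot
    obtain ⟨hne, hnd, -, hch⟩ := (mem_pathFinset E).mp hL
    cases L with
    | nil => exact absurd rfl hne
    | cons v r =>
        rw [Set.Finite.mem_toFinset] at hnot
        rw [← pathF_univ E d wt (v :: r)]
        by_cases hv : v = α
        · by_cases hl : r.getLastD v = ω
          · exfalso
            refine hnot ⟨hnd, ?_, ?_, hch⟩
            · rw [List.head?_cons, hv]
            · rw [getLast?_cons', hl]
          · by_contra h
            exact hl ((RS_pathF_cons E d wt Finset.univ v r) _ _ h).symm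
        · by_contra h
          exact hv ((CS_pathF_cons E d wt Finset.univ v r) _ _ h).symm

end
end

section
/- Walk generating function between vertices of cycle graphs: for every n ≥ 3 and every integer d with 1 ≤ d ≤ n/2, in ℤ[[z]] one has (Q_{n−1} − 2z²·Q_{n−2} − 2zⁿ) · (Σ_{m≥0} N_m z^m) = z^{n−d}·Q_{d−1} + z^d·Q_{n−d−1}, where N_m is the number of walks of length m from vertex 1 to vertex 1 + d in the cycle graph C_n. -/
/-- The polynomials `Q_k` (viewed in `ℤ[[z]]`), defined by `Q₀ = Q₁ = 1` and
`Q_k = Q_{k-1} − z² · Q_{k-2}` for `k ≥ 2`. -/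
noncomputable def Qpoly : ℕ → PowerSeries ℤ
  | 0 => 1
  | 1 => 1
  | k + 2 => Qpoly (k + 1) - PowerSeries.X ^ 2 * Qpoly k

/-- The adjacency matrix of the path graph `P_k` on vertices `1, …, k`
(indices `0, …, k − 1`), with edges `{i, i+1}` for `1 ≤ i < k`. -/
def pathAdj (k : ℕ) : Matrix (Fin k) (Fin k) ℤ :=
  Matrix.of fun i j => if i.val + 1 = j.val ∨ j.val + 1 = i.val then 1 else 0

/-- The adjacency matrix of the cycle graph `C_n` on vertices `1, …, n`
(indices `0, …, n − 1`), with edges `{i, i+1}` for `1 ≤ i < n` and `{n, 1}`. -/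
def cycleAdj (n : ℕ) : Matrix (Fin n) (Fin n) ℤ :=
  Matrix.of fun i j =>
    if i.val + 1 = j.val ∨ j.val + 1 = i.val ∨
        (i.val = n - 1 ∧ j.val = 0) ∨ (j.val = n - 1 ∧ i.val = 0)
    then 1 else 0

open PowerSeries

lemma fin_add_one_val {n : ℕ} [NeZero n] (hn : 3 ≤ n) (j : Fin n) :
    (j + 1 : Fin n).val = if j.val = n - 1 then 0 else j.val + 1 := by
  cases n with
  | zero => omega
  | succ m =>
    rw [Fin.val_add_one]
    have := j.isLt
    split_ifs with h h' h' <;> simp_all [Fin.ext_iff, Fin.val_last]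

lemma fin_sub_one_val {n : ℕ} [NeZero n] (hn : 3 ≤ n) (j : Fin n) :
    (j - 1 : Fin n).val = if j.val = 0 then n - 1 else j.val - 1 := by
  cases n with
  | zero => omega
  | succ m =>
    rw [Fin.coe_sub_one]
    have := j.isLt
    split_ifs with h h' h' <;> simp only [Fin.ext_iff, Fin.val_zero] at * <;> omega

noncomputable def wfun (n : ℕ) (j : ℕ) : PowerSeries ℤ :=
  if j = 0 then Qpoly (n - 1)
  else X ^ j * Qpoly (n - 1 - j) + X ^ (n - j) * Qpoly (j - 1)

lemma wfun_eq (n j : ℕ) (h : j ≠ 0) :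
    wfun n j = X ^ j * Qpoly (n - 1 - j) + X ^ (n - j) * Qpoly (j - 1) := if_neg h

lemma wfun_recur {n : ℕ} [NeZero n] (hn : 3 ≤ n) (j : Fin n) :
    wfun n j.val - X * wfun n ((j - 1 : Fin n)).val - X * wfun n ((j + 1 : Fin n)).val
      = if j.val = 0 then
          Qpoly (n - 1) - 2 * X ^ 2 * Qpoly (n - 2) - 2 * X ^ n
        else 0 := by
  obtain ⟨p, rfl⟩ : ∃ p, n = p + 3 := ⟨n - 3, by omega⟩
  have hj := j.isLt
  rw [fin_sub_one_val hn, fin_add_one_val hn]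
  have hn1 : p + 3 - 1 = p + 2 := by omega
  have hn2 : p + 3 - 2 = p + 1 := by omega
  rw [hn1, hn2]
  have hq0 : Qpoly 0 = 1 := rfl
  have hq1 : Qpoly 1 = 1 := rfl
  -- useful evaluations
  have e0 : wfun (p + 3) 0 = Qpoly (p + 2) := by
    simp [wfun]
  rcases Nat.eq_or_lt_of_le (Nat.zero_le j.val) with h0 | h0
  · -- j = 0
    rw [← h0, show (0:ℕ) + 1 = 1 by norm_num]
    rw [if_pos rfl, if_neg (by omega), if_pos rfl]
    rw [e0, wfun_eq _ _ (by omega : p + 2 ≠ 0), wfun_eq _ _ (by omega : (1:ℕ) ≠ 0)]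
    rw [show p + 3 - 1 - (p + 2) = 0 by omega, show p + 3 - (p + 2) = 1 by omega,
      show p + 2 - 1 = p + 1 by omega, show p + 3 - 1 - 1 = p + 1 by omega,
      show p + 3 - 1 = p + 2 by omega, show (1:ℕ) - 1 = 0 by omega]
    rw [hq0]
    ring
  · rcases Nat.lt_or_ge j.val (p + 2) with htop | htop
    · rcases Nat.lt_or_ge j.val 2 with h1 | h1
      · -- j = 1
        have hj1 : j.val = 1 := by omega
        rw [hj1, show (1:ℕ) - 1 = 0 by norm_num, show (1:ℕ) + 1 = 2 by norm_num]
        rw [if_neg (by omega), if_neg (by omega), if_neg (by omega)]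
        rw [e0]
        rw [wfun_eq _ _ (by omega : (1:ℕ) ≠ 0), wfun_eq _ _ (by omega : (2:ℕ) ≠ 0)]
        rw [show p + 3 - 1 - 1 = p + 1 by omega, show p + 3 - 1 = p + 2 by omega,
          show (1:ℕ) - 1 = 0 by omega, show p + 2 - 2 = p by omega,
          show p + 3 - 2 = p + 1 by omega, show (2:ℕ) - 1 = 1 by omega]
        rw [hq0, hq1, show Qpoly (p + 2) = Qpoly (p + 1) - X ^ 2 * Qpoly p from rfl]
        ring
      · -- middle: 2 ≤ j ≤ p + 1
        obtain ⟨b, hb⟩ : ∃ b, j.val = b + 2 := ⟨j.val - 2, by omega⟩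
        obtain ⟨c, hc⟩ : ∃ c, p = b + c + 1 := ⟨p - b - 1, by omega⟩
        subst hc
        rw [hb]
        rw [if_neg (by omega), if_neg (by omega), if_neg (by omega)]
        rw [show b + 2 - 1 = b + 1 by omega, show b + 2 + 1 = b + 3 by omega]
        rw [wfun_eq _ _ (by omega : b + 2 ≠ 0), wfun_eq _ _ (by omega : b + 1 ≠ 0),
          wfun_eq _ _ (by omega : b + 3 ≠ 0)]
        rw [show b + c + 1 + 3 - 1 - (b + 2) = c + 1 by omega,
          show b + c + 1 + 3 - (b + 2) = c + 2 by omega,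
          show b + 2 - 1 = b + 1 by omega,
          show b + c + 1 + 3 - 1 - (b + 1) = c + 2 by omega,
          show b + c + 1 + 3 - (b + 1) = c + 3 by omega,
          show b + 1 - 1 = b by omega,
          show b + c + 1 + 3 - 1 - (b + 3) = c by omega,
          show b + c + 1 + 3 - (b + 3) = c + 1 by omega,
          show b + 3 - 1 = b + 2 by omega]
        rw [show Qpoly (c + 2) = Qpoly (c + 1) - X ^ 2 * Qpoly c from rfl,
          show Qpoly (b + 2) = Qpoly (b + 1) - X ^ 2 * Qpoly b from rfl]
        ring
    · -- j = p + 2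
      have hj2 : j.val = p + 2 := by omega
      rw [hj2]
      rw [if_neg (by omega), if_pos rfl, if_neg (by omega)]
      rw [e0]
      rw [wfun_eq _ _ (by omega : p + 2 ≠ 0)]
      rw [show p + 2 - 1 = p + 1 by omega]
      rw [wfun_eq _ _ (by omega : p + 1 ≠ 0)]
      rw [show p + 3 - 1 - (p + 2) = 0 by omega, show p + 3 - (p + 2) = 1 by omega,
        show p + 3 - 1 - (p + 1) = 1 by omega,
        show p + 3 - (p + 1) = 2 by omega, show p + 1 - 1 = p by omega]
      rw [hq0, hq1, show Qpoly (p + 2) = Qpoly (p + 1) - X ^ 2 * Qpoly p from rfl]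
      ring

lemma cycleAdj_apply {n : ℕ} [NeZero n] (hn : 3 ≤ n) (j k : Fin n) :
    cycleAdj n j k = (if j = k - 1 then 1 else 0) + (if j = k + 1 then 1 else 0) := by
  have hs := fin_sub_one_val hn k
  have ha := fin_add_one_val hn k
  have hj := j.isLt
  have hk := k.isLt
  simp only [cycleAdj, Matrix.of_apply, Fin.ext_iff, hs, ha]
  clear hs ha
  split_ifs <;> omega

lemma Frec {n : ℕ} [NeZero n] (hn : 3 ≤ n) (i0 k : Fin n) :
    (PowerSeries.mk fun m => ((cycleAdj n ^ m) i0 k : ℤ))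
        - X * (PowerSeries.mk fun m => ((cycleAdj n ^ m) i0 (k - 1) : ℤ))
        - X * (PowerSeries.mk fun m => ((cycleAdj n ^ m) i0 (k + 1) : ℤ))
      = if k = i0 then 1 else 0 := by
  ext m
  rw [map_sub, map_sub]
  cases m with
  | zero =>
    simp only [coeff_zero_X_mul, coeff_mk, pow_zero, Matrix.one_apply, sub_zero]
    by_cases h : k = i0
    · subst h; simp
    · rw [if_neg h, if_neg (fun hh => h hh.symm)]; simp
  | succ m =>
    simp only [coeff_succ_X_mul, coeff_mk]
    have hpow : (cycleAdj n ^ (m + 1)) i0 k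
        = (cycleAdj n ^ m) i0 (k - 1) + (cycleAdj n ^ m) i0 (k + 1) := by
      rw [pow_succ, Matrix.mul_apply]
      simp only [cycleAdj_apply hn, mul_add, mul_ite, mul_one, mul_zero]
      rw [Finset.sum_add_distrib, Fintype.sum_ite_eq', Fintype.sum_ite_eq']
    rw [hpow]
    by_cases h : k = i0 <;> simp [h]

/-- Walk generating function between vertices of cycle graphs: for
`n ≥ 3` and `1 ≤ d ≤ n/2`,
`(Q_{n-1} − 2z²·Q_{n-2} − 2zⁿ) · (Σ_m N_m z^m) = z^{n-d}·Q_{d-1} + z^d·Q_{n-d-1}` in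
`ℤ[[z]]`, where `N_m` is the number of walks of length `m` from vertex `1` to vertex
`1 + d` in `C_n` (the corresponding entry of the `m`-th power of the adjacency
matrix, with vertex `i` carried by index `i − 1`). -/
theorem stmt18 (n d : ℕ) (hn : 3 ≤ n) (hd1 : 1 ≤ d) (hd2 : 2 * d ≤ n) :
    (Qpoly (n - 1) - 2 * PowerSeries.X ^ 2 * Qpoly (n - 2) - 2 * PowerSeries.X ^ n) *
        PowerSeries.mk
          (fun m => ((cycleAdj n ^ m) ⟨0, by omega⟩ ⟨d, by omega⟩ : ℤ)) =
      PowerSeries.X ^ (n - d) * Qpoly (d - 1) + PowerSeries.X ^ d * Qpoly (n - d - 1) := by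
  haveI : NeZero n := ⟨by omega⟩
  set P : PowerSeries ℤ := Qpoly (n - 1) - 2 * X ^ 2 * Qpoly (n - 2) - 2 * X ^ n with hP
  let i0 : Fin n := ⟨0, by omega⟩
  let dF : Fin n := ⟨d, by omega⟩
  let F : Fin n → PowerSeries ℤ := fun k => PowerSeries.mk fun m => ((cycleAdj n ^ m) i0 k : ℤ)
  let c : Fin n → PowerSeries ℤ := fun k => wfun n ((k - dF : Fin n)).val
  have hF : ∀ k : Fin n, F k - X * F (k - 1) - X * F (k + 1) = if k = i0 then 1 else 0 :=
    fun k => Frec hn i0 k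
  have hc : ∀ k : Fin n, c k - X * c (k - 1) - X * c (k + 1) = if k = dF then P else 0 := by
    intro k
    have h1 : (k - 1 : Fin n) - dF = (k - dF) - 1 := sub_right_comm k 1 dF
    have h2 : (k + 1 : Fin n) - dF = (k - dF) + 1 := add_sub_right_comm k 1 dF
    show wfun n ((k - dF : Fin n)).val - X * wfun n (((k - 1 : Fin n) - dF : Fin n)).val
        - X * wfun n (((k + 1 : Fin n) - dF : Fin n)).val = _
    rw [h1, h2, wfun_recur hn (k - dF)]
    by_cases h : k = dF
    · subst h; rw [if_pos rfl, if_pos (by simp [sub_self])]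
    · rw [if_neg ?_, if_neg h]
      intro hv
      exact h (sub_eq_zero.mp (Fin.ext hv))
  have sum1 : ∑ k : Fin n, c k * (F k - X * F (k - 1) - X * F (k + 1)) = c i0 := by
    simp only [hF, mul_ite, mul_one, mul_zero]
    exact Fintype.sum_ite_eq' i0 c
  have r1 : ∑ k : Fin n, c k * (X * F (k - 1)) = ∑ k : Fin n, X * c (k + 1) * F k := by
    apply Fintype.sum_equiv (Equiv.subRight (1 : Fin n))
    intro x
    simp only [Equiv.subRight_apply]
    rw [sub_add_cancel]
    ring
  have r2 : ∑ k : Fin n, c k * (X * F (k + 1)) = ∑ k : Fin n, X * c (k - 1) * F k := by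
    apply Fintype.sum_equiv (Equiv.addRight (1 : Fin n))
    intro x
    simp only [Equiv.coe_addRight]
    rw [add_sub_cancel_right]
    ring
  have sum2 : ∑ k : Fin n, c k * (F k - X * F (k - 1) - X * F (k + 1))
      = ∑ k : Fin n, (c k - X * c (k - 1) - X * c (k + 1)) * F k := by
    simp only [mul_sub, sub_mul, Finset.sum_sub_distrib]
    rw [r1, r2]
    ring_nf
  have sum3 : ∑ k : Fin n, (c k - X * c (k - 1) - X * c (k + 1)) * F k = P * F dF := by
    simp only [hc, ite_mul, zero_mul]
    exact Fintype.sum_ite_eq' dF (fun k => P * F k)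
  have key : P * F dF = c i0 := by rw [← sum3, ← sum2, sum1]
  have hval : ((i0 - dF : Fin n)).val = n - d := by
    rw [Fin.sub_def]
    show (n - d + 0) % n = n - d
    rw [Nat.add_zero]
    exact Nat.mod_eq_of_lt (by omega)
  have hci0 : c i0 = X ^ (n - d) * Qpoly (d - 1) + X ^ d * Qpoly (n - d - 1) := by
    show wfun n ((i0 - dF : Fin n)).val = _
    rw [hval, wfun_eq _ _ (by omega), show n - 1 - (n - d) = d - 1 by omega,
      show n - (n - d) = d by omega]
  calc P * PowerSeries.mk (fun m => ((cycleAdj n ^ m) ⟨0, by omega⟩ ⟨d, by omega⟩ : ℤ))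
      = P * F dF := rfl
    _ = c i0 := key
    _ = X ^ (n - d) * Qpoly (d - 1) + X ^ d * Qpoly (n - d - 1) := hci0
end
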